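/- Let t be a string and let t₁ = t[i₁..j₁] and t₂ = t[i₂..j₂] be substrings of t with periods p₁ and p₂ respectively. Suppose the two occurrence intervals overlap in at least p₁ + p₂ − gcd(p₁,p₂) positions, i.e., min(j₁,j₂) − max(i₁,i₂) + 1 ≥ p₁ + p₂ − gcd(p₁,p₂). Then gcd(p₁,p₂) is a period of both t₁ and t₂. -/

import Mathlib

/-- `p` is a period of the substring `t[i..j]` of the 1-indexed string `t`:
`1 ≤ p ≤ |t[i..j]| = j - i + 1`, and `t[k] = t[k + p]` whenever both positions
lie in `[i..j]` (vacuously, the length is always a period). -/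
def IsPeriodOf {α : Type*} (t : ℕ → α) (i j p : ℕ) : Prop :=
  1 ≤ p ∧ p ≤ j + 1 - i ∧ ∀ k, i ≤ k → k + p ≤ j → t (k + p) = t k

/-- The minimal period of the substring `t[i..j]`. -/
noncomputable def minPeriod {α : Type*} (t : ℕ → α) (i j : ℕ) : ℕ :=
  sInf {p | IsPeriodOf t i j p}

/-- `t[i..j]` is a run of the string `t[1..n]`: its exponent is at least `2`
(i.e. `j - i + 1 ≥ 2 · minPeriod`), and the extensions `t[i-1..j]` (if `i > 1`)
and `t[i..j+1]` (if `j < n`) have strictly larger minimal periods. -/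
def IsRun {α : Type*} (t : ℕ → α) (n i j : ℕ) : Prop :=
  1 ≤ i ∧ i ≤ j ∧ j ≤ n ∧
  2 * minPeriod t i j ≤ j + 1 - i ∧
  (1 < i → minPeriod t i j < minPeriod t (i - 1) j) ∧
  (j < n → minPeriod t i j < minPeriod t i (j + 1))

private lemma per_shift {α : Type*} (t : ℕ → α) (p a b : ℕ)
    (hper : ∀ x, a ≤ x → x + p ≤ b → t (x + p) = t x) :
    ∀ n x, a ≤ x → x + n * p ≤ b → t (x + n * p) = t x := by
  intro n
  induction n with
  | zero => intro x _ _; simp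
  | succ n ih =>
    intro x hx hxb
    have h1 : x + (n + 1) * p = (x + n * p) + p := by ring
    rw [h1, hper (x + n * p) (by omega) (by omega), ih x hx (by omega)]

private lemma connect {α : Type*} (t : ℕ → α) (p a b : ℕ) (hp : 1 ≤ p)
    (hper : ∀ x, a ≤ x → x + p ≤ b → t (x + p) = t x) :
    ∀ u v, a ≤ u → u ≤ b → a ≤ v → v ≤ b → u % p = v % p → t u = t v := by
  have key : ∀ u v, a ≤ u → v ≤ b → u ≤ v → u % p = v % p → t u = t v := by
    intro u v hu hv huv hmod
    have hdvd : p ∣ (v - u) :=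
      Nat.dvd_of_mod_eq_zero (Nat.sub_mod_eq_zero_of_mod_eq hmod.symm)
    have hv' : v = u + ((v - u) / p) * p := by
      rw [Nat.div_mul_cancel hdvd]; omega
    rw [hv']
    exact (per_shift t p a b hper ((v - u) / p) u hu (by omega)).symm
  intro u v hu hub hv hvb hmod
  rcases le_total u v with h | h
  · exact key u v hu hvb h hmod
  · exact (key v u hv hub h hmod.symm).symm

private lemma exists_translate (p A B k : ℕ) (hp : 1 ≤ p) (h : A + p ≤ B + 1) :
    ∃ x, A ≤ x ∧ x ≤ B ∧ x % p = k % p := by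
  have hkp : k % p < p := Nat.mod_lt _ hp
  have hA1 : p * (A / p) ≤ A := by
    rw [Nat.mul_comm]; exact Nat.div_mul_le_self A p
  have hA2 : A < p * (A / p) + p := by
    have h1 := Nat.div_add_mod A p
    have h2 := Nat.mod_lt A hp
    omega
  have hmod : (k % p + p * (A / p)) % p = k % p := by
    rw [Nat.add_mul_mod_self_left]
    exact Nat.mod_mod_of_dvd k dvd_rfl
  rcases le_or_gt A (k % p + p * (A / p)) with hle | hlt
  · exact ⟨k % p + p * (A / p), hle, by omega, hmod⟩
  · refine ⟨k % p + p * (A / p) + p, by omega, by omega, ?_⟩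
    rw [Nat.add_mod_right]; exact hmod

/-- Fine and Wilf: on an interval with periods `p` and `q` and length at least
`p + q - gcd p q`, positions congruent mod `gcd p q` carry equal letters. -/
private lemma fine_wilf {α : Type*} (t : ℕ → α) :
    ∀ N p q I J, p + q ≤ N → 1 ≤ p → 1 ≤ q →
    (∀ x, I ≤ x → x + p ≤ J → t (x + p) = t x) →
    (∀ x, I ≤ x → x + q ≤ J → t (x + q) = t x) →
    I + p + q ≤ J + 1 + Nat.gcd p q →
    ∀ x y, I ≤ x → x ≤ J → I ≤ y → y ≤ J →
      x % Nat.gcd p q = y % Nat.gcd p q → t x = t y := by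
  intro N
  induction N with
  | zero => intro p q I J hN hp hq; omega
  | succ N ih =>
    have key : ∀ p q I J, p + q ≤ N + 1 → 1 ≤ q → q ≤ p →
        (∀ x, I ≤ x → x + p ≤ J → t (x + p) = t x) →
        (∀ x, I ≤ x → x + q ≤ J → t (x + q) = t x) →
        I + p + q ≤ J + 1 + Nat.gcd p q →
        ∀ x y, I ≤ x → x ≤ J → I ≤ y → y ≤ J →
          x % Nat.gcd p q = y % Nat.gcd p q → t x = t y := by
      intro p q I J hN hq hqp hper_p hper_q hlen x y hx hxJ hy hyJ hmod
      have hgle : Nat.gcd p q ≤ q := Nat.gcd_le_right p hq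
      rcases eq_or_lt_of_le hqp with heq | hlt
      · -- p = q : gcd = p
        subst heq
        rw [Nat.gcd_self q] at hmod
        exact connect t q I J hq hper_p x y hx hxJ hy hyJ hmod
      · -- q < p
        set q' := p - q with hq'def
        have hq'1 : 1 ≤ q' := by omega
        have hgcd : Nat.gcd q q' = Nat.gcd p q := by
          rw [hq'def, Nat.gcd_sub_self_right (le_of_lt hlt), Nat.gcd_comm]
        set g := Nat.gcd p q with hgdef
        have hgp : g ∣ p := Nat.gcd_dvd_left p q
        have hgq : g ∣ q := Nat.gcd_dvd_right p q
        have hg1 : 1 ≤ g := Nat.gcd_pos_of_pos_left q (by omega)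
        have hgq' : g ∣ q' := by
          have := Nat.dvd_sub hgp hgq; rwa [← hq'def] at this
        have hgq'le : g ≤ q' := Nat.le_of_dvd (by omega) hgq'
        have hJq : I + q ≤ J := by omega
        -- period q' on [I, J - q]
        have hper_q' : ∀ z, I ≤ z → z + q' ≤ J - q → t (z + q') = t z := by
          intro z hz hzb
          have h1 : t (z + p) = t z := hper_p z hz (by omega)
          have h2 : t (z + q' + q) = t (z + q') := hper_q (z + q') (by omega) (by omega)
          have h3 : z + q' + q = z + p := by omega
          rw [h3] at h2
          rw [← h2, h1]
        have hper_q2 : ∀ z, I ≤ z → z + q ≤ J - q → t (z + q) = t z := by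
          intro z hz hzb; exact hper_q z hz (by omega)
        have ihE := ih q q' I (J - q) (by omega) hq hq'1 hper_q2 hper_q'
          (by rw [hgcd]; omega)
        rw [hgcd] at ihE
        -- reduction into [I, J - q]
        have red : ∀ z, I ≤ z → z ≤ J →
            ∃ w, I ≤ w ∧ w ≤ J - q ∧ w % g = z % g ∧ t w = t z := by
          intro z hz hzJ
          rcases le_or_gt z (J - q) with hle | hgt
          · exact ⟨z, hz, hle, rfl, rfl⟩
          · have hzq : I + q ≤ z := by omega
            refine ⟨z - q, by omega, by omega, ?_, ?_⟩
            · obtain ⟨c, hc⟩ := hgq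
              have hzz : z = (z - q) + g * c := by omega
              have : z % g = (z - q) % g := by
                conv_lhs => rw [hzz]
                rw [Nat.add_mul_mod_self_left]
              exact this.symm
            · have hstep := hper_q (z - q) (by omega) (by omega)
              have hzz : z - q + q = z := by omega
              rw [hzz] at hstep
              exact hstep.symm
        obtain ⟨w₁, hw₁I, hw₁J, hw₁m, hw₁t⟩ := red x hx hxJ
        obtain ⟨w₂, hw₂I, hw₂J, hw₂m, hw₂t⟩ := red y hy hyJ
        rw [← hw₁t, ← hw₂t]
        exact ihE w₁ w₂ hw₁I hw₁J hw₂I hw₂J (by rw [hw₁m, hw₂m, hmod])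
    intro p q I J hN hp hq hper_p hper_q hlen x y hx hxJ hy hyJ hmod
    rcases le_total q p with h | h
    · exact key p q I J hN hq h hper_p hper_q hlen x y hx hxJ hy hyJ hmod
    · rw [Nat.gcd_comm] at hmod
      exact key q p I J (by omega) hp h hper_q hper_p
        (by rw [Nat.gcd_comm]; omega) x y hx hxJ hy hyJ hmod

/-- Propagation of the gcd period from the overlap to the full substring. -/
private lemma propagate {α : Type*} (t : ℕ → α) (p g a b I J : ℕ)
    (hp : 1 ≤ p) (hg : 1 ≤ g) (hgp : g ∣ p)
    (haI : a ≤ I) (hJb : J ≤ b) (hwin : I + p ≤ J + 1)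
    (hper : ∀ x, a ≤ x → x + p ≤ b → t (x + p) = t x)
    (E : ∀ x y, I ≤ x → x ≤ J → I ≤ y → y ≤ J → x % g = y % g → t x = t y) :
    ∀ k, a ≤ k → k + g ≤ b → t (k + g) = t k := by
  intro k hk hkb
  obtain ⟨x, hxI, hxJ, hxm⟩ := exists_translate p I J k hp hwin
  obtain ⟨x', hx'I, hx'J, hx'm⟩ := exists_translate p I J (k + g) hp hwin
  have hgb : g ≤ p := Nat.le_of_dvd (by omega) hgp
  have h1 : t k = t x :=
    connect t p a b hp hper k x hk (by omega) (by omega) (by omega) hxm.symm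
  have h2 : t (k + g) = t x' :=
    connect t p a b hp hper (k + g) x' (by omega) (by omega) (by omega) (by omega) hx'm.symm
  have hxg : x % g = x' % g := by
    have e1 : x % g = k % g := by
      rw [← Nat.mod_mod_of_dvd x hgp, hxm, Nat.mod_mod_of_dvd k hgp]
    have e2 : x' % g = (k + g) % g := by
      rw [← Nat.mod_mod_of_dvd x' hgp, hx'm, Nat.mod_mod_of_dvd (k + g) hgp]
    rw [e1, e2, Nat.add_mod_right]
  rw [h1, h2]
  exact (E x x' hxI hxJ hx'I hx'J hxg).symm

/-- If the substrings `t[i₁..j₁]` and `t[i₂..j₂]` have periods `p₁` and `p₂`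
respectively and their occurrence intervals overlap in at least
`p₁ + p₂ - gcd(p₁, p₂)` positions, then `gcd(p₁, p₂)` is a period of both. -/
theorem periods_of_overlapping_substrings {α : Type*} (t : ℕ → α)
    (i₁ j₁ i₂ j₂ p₁ p₂ : ℕ)
    (h₁ : IsPeriodOf t i₁ j₁ p₁) (h₂ : IsPeriodOf t i₂ j₂ p₂)
    (hov : (p₁ : ℤ) + p₂ - Nat.gcd p₁ p₂ ≤ (min j₁ j₂ : ℤ) - max i₁ i₂ + 1) :
    IsPeriodOf t i₁ j₁ (Nat.gcd p₁ p₂) ∧ IsPeriodOf t i₂ j₂ (Nat.gcd p₁ p₂) := by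
  obtain ⟨hp₁, hp₁len, hper₁⟩ := h₁
  obtain ⟨hp₂, hp₂len, hper₂⟩ := h₂
  set g := Nat.gcd p₁ p₂ with hgdef
  set I := max i₁ i₂ with hIdef
  set J := min j₁ j₂ with hJdef
  have hg1 : 1 ≤ g := Nat.gcd_pos_of_pos_left p₂ (by omega)
  have hgle₁ : g ≤ p₁ := Nat.gcd_le_left p₂ hp₁
  have hgle₂ : g ≤ p₂ := Nat.gcd_le_right p₁ hp₂
  have hlen : I + p₁ + p₂ ≤ J + 1 + g := by
    have h1 : ((I : ℕ) : ℤ) = (max i₁ i₂ : ℕ) := by rw [hIdef]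
    have h2 : ((J : ℕ) : ℤ) = (min j₁ j₂ : ℕ) := by rw [hJdef]
    push_cast at h1 h2
    omega
  have hIi₁ : i₁ ≤ I := le_max_left _ _
  have hIi₂ : i₂ ≤ I := le_max_right _ _
  have hJj₁ : J ≤ j₁ := min_le_left _ _
  have hJj₂ : J ≤ j₂ := min_le_right _ _
  have hperI₁ : ∀ x, I ≤ x → x + p₁ ≤ J → t (x + p₁) = t x := fun x hx hxJ =>
    hper₁ x (by omega) (by omega)
  have hperI₂ : ∀ x, I ≤ x → x + p₂ ≤ J → t (x + p₂) = t x := fun x hx hxJ =>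
    hper₂ x (by omega) (by omega)
  have E := fine_wilf t (p₁ + p₂) p₁ p₂ I J le_rfl hp₁ hp₂ hperI₁ hperI₂ hlen
  rw [← hgdef] at E
  constructor
  · exact ⟨hg1, by omega,
      propagate t p₁ g i₁ j₁ I J hp₁ hg1 (Nat.gcd_dvd_left p₁ p₂) hIi₁ hJj₁
        (by omega) hper₁ E⟩
  · exact ⟨hg1, by omega,
      propagate t p₂ g i₂ j₂ I J hp₂ hg1 (Nat.gcd_dvd_right p₁ p₂) hIi₂ hJj₂
        (by omega) hper₂ E⟩
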